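/- arXiv:math/9912078 — 2 statements merged into one kernel-verified Lean document; each statement's English description precedes it below -/
import Mathlib

section
/- Schützenberger's identity: let u, v be elements of a ℂ(q)-algebra (completed so that power series make sense, e.g. u, v nilpotent or formal) with uv = q²vu. Define the q-exponential s_q(w) = Σ_{k=0}^∞ q^{k(k-1)/2}(-1)^k w^k / ((q-q⁻¹)(q²-q⁻²)···(q^k - q^{-k})) (with the convention that the k=0 term is 1). Then s_q(u)·s_q(v) = s_q(u+v). -/
/-- The coefficients of the q-exponential
`s_q(w) = Σ_k (-1)^k q^{k(k-1)/2} w^k / ∏_{j=1}^k (q^j - q⁻ʲ)`. -/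
noncomputable def sqCoeff (q : ℂ) (k : ℕ) : ℂ :=
  (-1) ^ k * q ^ (k * (k - 1) / 2) / ∏ j ∈ Finset.range k, (q ^ (j + 1) - q⁻¹ ^ (j + 1))

/-- Truncation of the q-exponential series applied to an algebra element; for a
nilpotent argument a sufficiently long truncation equals the genuine series. -/
noncomputable def sqTrunc {A : Type*} [Ring A] [Algebra ℂ A] (q : ℂ) (x : A) (n : ℕ) : A :=
  ∑ k ∈ Finset.range n, sqCoeff q k • x ^ k

namespace SchutzAux

/-- q-binomial-type coefficients defined by a Pascal-style recursion. -/
noncomputable def g (q : ℂ) : ℕ → ℕ → ℂ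
  | 0, 0 => 1
  | 0, _+1 => 0
  | _+1, 0 => 1
  | n+1, i+1 => q⁻¹ ^ (2*(n-i)) * g q n i + g q n (i+1)

lemma g_zero (q : ℂ) (n : ℕ) : g q n 0 = 1 := by cases n <;> rfl

lemma g_of_lt (q : ℂ) : ∀ n i, n < i → g q n i = 0
  | 0, _+1, _ => rfl
  | n+1, i+1, h => by
    rw [g, g_of_lt q n i (by omega), g_of_lt q n (i+1) (by omega)]; ring

lemma g_diag (q : ℂ) : ∀ n, g q n n = 1
  | 0 => rfl
  | n+1 => by rw [g, g_of_lt q n (n+1) (by omega), g_diag q n]; simp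

lemma sqCoeff_zero (q : ℂ) : sqCoeff q 0 = 1 := by simp [sqCoeff]

section Coeff

variable (q : ℂ) (hq : q ≠ 0) (hroot : ∀ j : ℕ, j ≠ 0 → q ^ (2 * j) ≠ 1)

include hq hroot in
lemma den_ne (k : ℕ) : q ^ (k+1) - q⁻¹ ^ (k+1) ≠ 0 := by
  intro h
  apply hroot (k+1) (by omega)
  have h1 : q ^ (k+1) = q⁻¹ ^ (k+1) := sub_eq_zero.mp h
  have : q ^ (2*(k+1)) = q ^ (k+1) * q⁻¹ ^ (k+1) := by
    rw [two_mul, pow_add, h1]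
  rw [this, ← mul_pow, mul_inv_cancel₀ hq, one_pow]

include hq hroot in
lemma sqCoeff_ne (k : ℕ) : sqCoeff q k ≠ 0 := by
  unfold sqCoeff
  apply div_ne_zero
  · exact mul_ne_zero (pow_ne_zero _ (by norm_num)) (pow_ne_zero _ hq)
  · exact Finset.prod_ne_zero_iff.mpr fun j _ => den_ne q hq hroot j

lemma sqCoeff_succ (k : ℕ) :
    sqCoeff q (k+1) = sqCoeff q k * (-q ^ k / (q ^ (k+1) - q⁻¹ ^ (k+1))) := by
  rw [sqCoeff, sqCoeff, Finset.prod_range_succ, Nat.triangle_succ, pow_add]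
  rw [div_mul_div_comm]
  ring

include hq hroot in
lemma key (a b : ℕ) :
    (-q ^ a / (q ^ (a+1) - q⁻¹ ^ (a+1))) * (-q ^ b / (q ^ (b+1) - q⁻¹ ^ (b+1)))
      = (q⁻¹ ^ (2*(b+1)) * (-q ^ b / (q ^ (b+1) - q⁻¹ ^ (b+1)))
          + (-q ^ a / (q ^ (a+1) - q⁻¹ ^ (a+1))))
        * (-q ^ (a+b+1) / (q ^ (a+b+1+1) - q⁻¹ ^ (a+b+1+1))) := by
  have hD : ∀ k : ℕ, q ^ (k+1) - q⁻¹ ^ (k+1) = (q ^ (2*(k+1)) - 1) / q ^ (k+1) := by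
    intro k
    rw [inv_pow, two_mul, pow_add]
    field_simp
    ring
  have hne : ∀ k : ℕ, q ^ (2*(k+1)) - 1 ≠ 0 := fun k h =>
    hroot (k+1) (by omega) (by linear_combination h)
  rw [hD a, hD b, hD (a+b+1), inv_pow]
  have ha := hne a
  have hb := hne b
  have hn := hne (a+b+1)
  have hqa := pow_ne_zero (a+1) hq
  have hqb := pow_ne_zero (b+1) hq
  have hqn := pow_ne_zero (a+b+1+1) hq
  have h2b := pow_ne_zero (2*(b+1)) hq
  field_simp
  ring

include hq hroot in
lemma coeff_g : ∀ n, ∀ i ≤ n, sqCoeff q i * sqCoeff q (n - i) = g q n i * sqCoeff q n := by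
  intro n
  induction n with
  | zero =>
    intro i hi
    interval_cases i
    simp [g, sqCoeff_zero]
  | succ n ih =>
    intro i hi
    match i with
    | 0 => simp [g_zero, sqCoeff_zero]
    | Nat.succ a =>
      rcases eq_or_lt_of_le hi with h | h
      · -- diagonal case i = n+1
        have ha : a = n := by omega
        subst ha
        simp [g_diag, sqCoeff_zero]
      · -- 1 ≤ a+1 ≤ n
        obtain ⟨b, rfl⟩ : ∃ b, n = a + b + 1 := ⟨n - (a+1), by omega⟩
        have e1 : a + b + 1 - a = b + 1 := by omega
        have e2 : a + b + 1 - (a + 1) = b := by omega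
        have e3 : a + b + 1 + 1 - (a + 1) = b + 1 := by omega
        have h1 := ih a (by omega)
        have h2 := ih (a+1) (by omega)
        rw [e1] at h1
        rw [e2] at h2
        rw [e3, g, e1]
        rw [sqCoeff_succ q a, sqCoeff_succ q b] at *
        rw [sqCoeff_succ q (a+b+1)]
        have hk := key q hq hroot a b
        have hcn := sqCoeff_ne q hq hroot (a+b+1)
        set Ra := -q ^ a / (q ^ (a+1) - q⁻¹ ^ (a+1)) with hRa
        set Rb := -q ^ b / (q ^ (b+1) - q⁻¹ ^ (b+1)) with hRb
        set Rn := -q ^ (a+b+1) / (q ^ (a+b+1+1) - q⁻¹ ^ (a+b+1+1)) with hRn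
        apply mul_right_cancel₀ hcn
        linear_combination (q⁻¹ ^ (2*(b+1)) * Rn * sqCoeff q (a+b+1)) * h1
          + (Rn * sqCoeff q (a+b+1)) * h2
          + (sqCoeff q a * sqCoeff q b * sqCoeff q (a+b+1)) * hk

end Coeff

section Alg

variable {A : Type*} [Ring A] [Algebra ℂ A] (q : ℂ) (hq : q ≠ 0)

include hq in
lemma vu_pow (u v : A) (huv : u * v = q ^ 2 • (v * u)) :
    ∀ k : ℕ, v ^ k * u = q⁻¹ ^ (2 * k) • (u * v ^ k) := by
  have base : v * u = q⁻¹ ^ 2 • (u * v) := by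
    rw [huv, smul_smul, inv_pow, inv_mul_cancel₀ (pow_ne_zero 2 hq), one_smul]
  intro k
  induction k with
  | zero => simp
  | succ k ih =>
    rw [pow_succ, mul_assoc, base, mul_smul_comm, ← mul_assoc, ih,
      smul_mul_assoc, smul_smul, ← pow_add, mul_assoc u,
      show 2 + 2 * k = 2 * (k + 1) from by omega]

include hq in
lemma expand (u v : A) (huv : u * v = q ^ 2 • (v * u)) :
    ∀ n : ℕ, (u + v) ^ n = ∑ i ∈ Finset.range (n+1), g q n i • (u ^ i * v ^ (n - i)) := by
  intro n
  induction n with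
  | zero => simp [g]
  | succ n ih =>
    rw [pow_succ, ih, Finset.sum_mul]
    have step : ∀ i ∈ Finset.range (n+1),
        (g q n i • (u ^ i * v ^ (n - i))) * (u + v)
          = (g q n i * q⁻¹ ^ (2*(n-i))) • (u ^ (i+1) * v ^ (n - i))
            + g q n i • (u ^ i * v ^ (n + 1 - i)) := by
      intro i hi
      have hle : i ≤ n := by
        have := Finset.mem_range.mp hi; omega
      rw [mul_add]
      congr 1
      · rw [smul_mul_assoc, mul_assoc, vu_pow q hq u v huv (n-i), mul_smul_comm, smul_smul,
          ← mul_assoc, ← pow_succ]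
      · rw [smul_mul_assoc, mul_assoc,
          show n + 1 - i = (n - i) + 1 from by omega, pow_succ]
    rw [Finset.sum_congr rfl step, Finset.sum_add_distrib]
    have hS2 : ∑ i ∈ Finset.range (n+1), g q n i • (u ^ i * v ^ (n + 1 - i))
        = g q n 0 • (u ^ 0 * v ^ (n+1))
          + ∑ i ∈ Finset.range (n+1), g q n (i+1) • (u ^ (i+1) * v ^ (n - i)) := by
      rw [Finset.sum_range_succ', Nat.sub_zero, add_comm]
      congr 1
      rw [Finset.sum_range_succ, g_of_lt q n (n+1) (by omega), zero_smul, add_zero]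
      apply Finset.sum_congr rfl
      intro i hi
      rw [show n + 1 - (i + 1) = n - i from by omega]
    rw [hS2, Finset.sum_range_succ' _ (n+1)]
    have hT : ∀ i ∈ Finset.range (n+1),
        g q (n+1) (i+1) • (u ^ (i+1) * v ^ (n + 1 - (i+1)))
          = (g q n i * q⁻¹ ^ (2*(n-i))) • (u ^ (i+1) * v ^ (n - i))
            + g q n (i+1) • (u ^ (i+1) * v ^ (n - i)) := by
      intro i hi
      have : n + 1 - (i+1) = n - i := by omega
      rw [this, g, add_smul, mul_comm (q⁻¹ ^ (2*(n-i)))]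
    rw [Finset.sum_congr rfl hT, Finset.sum_add_distrib, g_zero, g_zero, Nat.sub_zero]
    abel

end Alg

end SchutzAux

open SchutzAux in
/-- Schützenberger's identity: if `u v = q² v u` (with `q` not a
root of unity, and `u, v` nilpotent so that the q-exponential series make sense),
then `s_q(u) s_q(v) = s_q(u + v)`. -/
theorem schutzenberger_identity {A : Type*} [Ring A] [Algebra ℂ A]
    (q : ℂ) (hq : q ≠ 0) (hroot : ∀ j : ℕ, j ≠ 0 → q ^ (2 * j) ≠ 1)
    (u v : A) (N : ℕ) (hu : u ^ N = 0) (hv : v ^ N = 0)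
    (huv : u * v = q ^ 2 • (v * u)) :
    sqTrunc q u (2 * N) * sqTrunc q v (2 * N) = sqTrunc q (u + v) (2 * N) := by
  classical
  set F : ℕ → ℕ → A := fun i j => (sqCoeff q i * sqCoeff q j) • (u ^ i * v ^ j) with hF
  have hFzero : ∀ i j : ℕ, 2 * N ≤ i + j → F i j = 0 := by
    intro i j hij
    rcases le_or_gt N i with h | h
    · have : u ^ i = 0 := by
        rw [← Nat.sub_add_cancel h, pow_add, hu, mul_zero]
      simp [hF, this]
    · have hjN : N ≤ j := by omega
      have : v ^ j = 0 := by
        rw [← Nat.sub_add_cancel hjN, pow_add, hv, mul_zero]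
      simp [hF, this]
  have hlhs : sqTrunc q u (2*N) * sqTrunc q v (2*N)
      = ∑ p ∈ Finset.range (2*N) ×ˢ Finset.range (2*N), F p.1 p.2 := by
    rw [sqTrunc, sqTrunc, Finset.sum_mul_sum, Finset.sum_product]
    apply Finset.sum_congr rfl; intro i _
    apply Finset.sum_congr rfl; intro j _
    rw [hF, smul_mul_assoc, mul_smul_comm, smul_smul]
  have hrhs : sqTrunc q (u + v) (2*N)
      = ∑ p ∈ (Finset.range (2*N)).sigma (fun n => Finset.range (n+1)),
          F p.2 (p.1 - p.2) := by
    rw [sqTrunc, Finset.sum_sigma]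
    apply Finset.sum_congr rfl
    intro n _
    rw [expand q hq u v huv n, Finset.smul_sum]
    apply Finset.sum_congr rfl
    intro i hi
    have hle : i ≤ n := Nat.lt_succ_iff.mp (Finset.mem_range.mp hi)
    show sqCoeff q n • (g q n i • (u ^ i * v ^ (n - i)))
        = (sqCoeff q i * sqCoeff q (n - i)) • (u ^ i * v ^ (n - i))
    rw [smul_smul, coeff_g q hq hroot n i hle, mul_comm]
  rw [hlhs, hrhs]
  rw [← Finset.sum_subset (Finset.filter_subset (fun p : ℕ × ℕ => p.1 + p.2 < 2*N)
      (Finset.range (2*N) ×ˢ Finset.range (2*N))) (by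
        rintro ⟨x, y⟩ hp hnp
        simp only [Finset.mem_filter, Finset.mem_product, Finset.mem_range] at hp hnp
        exact hFzero x y (by omega))]
  refine Finset.sum_nbij' (fun p => (⟨p.1 + p.2, p.1⟩ : (_ : ℕ) × ℕ))
    (fun p => (p.2, p.1 - p.2)) ?_ ?_ ?_ ?_ ?_
  · rintro ⟨x, y⟩ hp
    simp only [Finset.mem_filter, Finset.mem_product, Finset.mem_range] at hp
    simp only [Finset.mem_sigma, Finset.mem_range]
    omega
  · rintro ⟨x, y⟩ hp
    simp only [Finset.mem_sigma, Finset.mem_range] at hp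
    simp only [Finset.mem_filter, Finset.mem_product, Finset.mem_range]
    omega
  · rintro ⟨x, y⟩ _
    simp
  · rintro ⟨x, y⟩ hp
    simp only [Finset.mem_sigma, Finset.mem_range] at hp
    exact Sigma.ext (by simp; omega) (by simp)
  · rintro ⟨x, y⟩ _
    simp
end

section
/- Pentagon identity for the q-exponential: if uv = q²vu (in a suitable completed algebra, e.g. formal power series in two q-commuting variables), then s_q(v)·s_q(u) = s_q(u + v + q⁻¹uv), and moreover s_q(u + v + q⁻¹uv) = s_q(u)·s_q(q⁻¹uv)·s_q(v). -/
namespace PentagonAux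

open Finset

noncomputable def P (q : ℂ) (n : ℕ) : ℂ := ∏ j ∈ range n, (1 - q ^ (2 * (j + 1)))

noncomputable def B (q : ℂ) (n k : ℕ) : ℂ := if k ≤ n then P q n / (P q k * P q (n - k)) else 0

variable {q : ℂ}

lemma factor_ne (hroot : ∀ j : ℕ, j ≠ 0 → q ^ (2 * j) ≠ 1) (j : ℕ) :
    (1 : ℂ) - q ^ (2 * (j + 1)) ≠ 0 := by
  intro h
  exact hroot (j+1) (Nat.succ_ne_zero j) ((sub_eq_zero.mp h).symm)

lemma P_ne (hroot : ∀ j : ℕ, j ≠ 0 → q ^ (2 * j) ≠ 1) (n : ℕ) : P q n ≠ 0 :=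
  prod_ne_zero_iff.mpr fun j _ => factor_ne hroot j

lemma P_zero : P q 0 = 1 := by simp [P]

lemma P_succ (n : ℕ) : P q (n+1) = P q n * (1 - q ^ (2 * (n+1))) := prod_range_succ _ _

lemma even_helper (n : ℕ) : n*(n-1)/2 + n*(n+1)/2 = n*n := by
  obtain ⟨t, ht⟩ : ∃ t, n*(n+1) = t + t := (Nat.even_mul_succ_self n)
  have h1 : n*(n-1) + n + n = n*(n+1) := by
    cases n with
    | zero => simp
    | succ m => simp [Nat.succ_sub_one]; ring
  have h2 : n*(n-1) + n = n*n := by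
    cases n with
    | zero => simp
    | succ m => simp [Nat.succ_sub_one]; ring
  omega

lemma sqCoeff_eq (hq : q ≠ 0) (hroot : ∀ j : ℕ, j ≠ 0 → q ^ (2 * j) ≠ 1) (n : ℕ) :
    sqCoeff q n = q ^ (n*n) / P q n := by
  have hprod : ∏ j ∈ range n, (q ^ (j+1) - q⁻¹ ^ (j+1))
      = (-1)^n * (q⁻¹) ^ (n*(n+1)/2) * P q n := by
    induction n with
    | zero => simp [P]
    | succ m ih =>
      rw [prod_range_succ, ih, P_succ]
      have h1 : q ^ (m+1) - q⁻¹ ^ (m+1) = -(q⁻¹^(m+1)) * (1 - q^(2*(m+1))) := by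
        rw [inv_pow]
        field_simp
        ring
      have h2 : (m+1)*(m+2)/2 = m*(m+1)/2 + (m+1) := by
        obtain ⟨t, ht⟩ : ∃ t, m*(m+1) = t + t := (Nat.even_mul_succ_self m)
        have h3 : (m+1)*(m+2) = m*(m+1) + (m+1) + (m+1) := by ring
        omega
      rw [h1, show m+1+1 = m+2 from rfl, h2, pow_add]
      ring
  have hpne := P_ne hroot n
  have hqn : (q⁻¹ : ℂ) ^ (n*(n+1)/2) ≠ 0 := pow_ne_zero _ (inv_ne_zero hq)
  have hsgn : ((-1 : ℂ))^n ≠ 0 := pow_ne_zero _ (by norm_num)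
  rw [sqCoeff, hprod, div_eq_div_iff (by exact mul_ne_zero (mul_ne_zero hsgn hqn) hpne) hpne]
  have key : q ^ (n*(n-1)/2) * q ^ (n*(n+1)/2) = q ^ (n*n) := by
    rw [← pow_add, even_helper]
  rw [inv_pow]
  field_simp
  exact key

lemma B_zero (hroot : ∀ j : ℕ, j ≠ 0 → q ^ (2 * j) ≠ 1) (n : ℕ) : B q n 0 = 1 := by
  simp [B, P_zero, div_self (P_ne hroot n)]

lemma B_self (hroot : ∀ j : ℕ, j ≠ 0 → q ^ (2 * j) ≠ 1) (n : ℕ) : B q n n = 1 := by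
  simp [B, P_zero, div_self (P_ne hroot n)]

lemma B_eq_zero {n k : ℕ} (h : n < k) : B q n k = 0 := by
  simp [B, Nat.not_le.mpr h]

lemma B_pascal (hroot : ∀ j : ℕ, j ≠ 0 → q ^ (2 * j) ≠ 1) (m k : ℕ) :
    B q (m+1) (k+1) = B q m (k+1) + q^(2*(m-k)) * B q m k := by
  by_cases hkm : k ≤ m
  · rcases eq_or_lt_of_le hkm with rfl | hlt
    · rw [B_self hroot, B_self hroot, B_eq_zero (Nat.lt_succ_self k), Nat.sub_self]
      simp
    · obtain ⟨d, rfl⟩ : ∃ d, m = k + d + 1 := ⟨m - k - 1, by omega⟩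
      rw [B, if_pos (by omega), B, if_pos (by omega), B, if_pos (by omega)]
      rw [show k+d+1+1-(k+1) = d+1 by omega, show k+d+1-(k+1) = d by omega,
          show k+d+1-k = d+1 by omega, show k+d+1+1 = (k+d+1)+1 by omega,
          P_succ (k+d+1), P_succ k, P_succ d]
      have hP1 := P_ne hroot (k+d+1)
      have hP2 := P_ne hroot k
      have hP3 := P_ne hroot d
      have hf1 := factor_ne hroot (k+d+1)
      have hf2 := factor_ne hroot k
      have hf3 := factor_ne hroot d
      field_simp
      ring
  · rw [B_eq_zero (by omega), B_eq_zero (by omega), B_eq_zero (by omega)]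
    simp

lemma bracket (hroot : ∀ j : ℕ, j ≠ 0 → q ^ (2 * j) ≠ 1) (n k : ℕ) :
    B q n k * P q k * q^(2*(n-k)) + B q n (k+1) * P q (k+1) = B q n k * P q k := by
  by_cases hkn : k ≤ n
  · rcases eq_or_lt_of_le hkn with rfl | hlt
    · rw [B_self hroot, B_eq_zero (Nat.lt_succ_self k), Nat.sub_self]
      simp
    · obtain ⟨d, rfl⟩ : ∃ d, n = k + d + 1 := ⟨n - k - 1, by omega⟩
      rw [B, if_pos (by omega), B, if_pos (by omega)]
      rw [show k+d+1-(k+1) = d by omega, show k+d+1-k = d+1 by omega, P_succ d]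
      have hP1 := P_ne hroot (k+d+1)
      have hP2 := P_ne hroot k
      have hP3 := P_ne hroot d
      have hP4 := P_ne hroot (k+1)
      have hf3 := factor_ne hroot d
      field_simp
      ring
  · rw [B_eq_zero (by omega), B_eq_zero (by omega)]
    simp


lemma SId (hroot : ∀ j : ℕ, j ≠ 0 → q ^ (2 * j) ≠ 1) (m : ℕ) : ∀ n : ℕ,
    ∑ k ∈ range (m+1), B q m k * B q n k * P q k * q^(2*((m-k)*(n-k))) = 1 := by
  induction m with
  | zero =>
    intro n
    simp [B_zero hroot, P_zero]
  | succ m ih =>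
    intro n
    rw [Finset.sum_range_succ']
    have hg0 : B q (m+1) 0 * B q n 0 * P q 0 * q^(2*((m+1-0)*(n-0))) = q^(2*((m+1)*n)) := by
      rw [B_zero hroot, B_zero hroot, P_zero]
      simp
    rw [hg0]
    have hstep : ∀ k ∈ range (m+1),
        B q (m+1) (k+1) * B q n (k+1) * P q (k+1) * q^(2*((m+1-(k+1))*(n-(k+1))))
        = B q m (k+1) * B q n (k+1) * P q (k+1) * q^(2*((m-k)*(n-(k+1))))
          + B q m k * (B q n (k+1) * P q (k+1)) * q^(2*((m-k)*(n-k))) := by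
      intro k hk
      rw [show m+1-(k+1) = m-k by omega, B_pascal hroot, add_mul, add_mul, add_mul]
      congr 1
      by_cases hkn : k < n
      · obtain ⟨d, rfl⟩ : ∃ d, n = k + d + 1 := ⟨n - k - 1, by omega⟩
        rw [show k+d+1-(k+1) = d by omega, show k+d+1-k = d+1 by omega]
        rw [show 2*((m-k)*(d+1)) = 2*(m-k) + 2*((m-k)*d) by ring, pow_add]
        ring
      · rw [B_eq_zero (show n < k+1 by omega)]
        ring
    rw [Finset.sum_congr rfl hstep, Finset.sum_add_distrib]
    have hre : ∑ k ∈ range (m+1),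
        B q m (k+1) * B q n (k+1) * P q (k+1) * q^(2*((m-k)*(n-(k+1))))
        = (∑ j ∈ range (m+1), B q m j * B q n j * P q j * q^(2*((m+1-j)*(n-j))))
          - q^(2*((m+1)*n)) := by
      have h1 : ∀ k : ℕ, B q m (k+1) * B q n (k+1) * P q (k+1) * q^(2*((m-k)*(n-(k+1))))
          = B q m (k+1) * B q n (k+1) * P q (k+1) * q^(2*((m+1-(k+1))*(n-(k+1)))) := by
        intro k; rw [show m+1-(k+1) = m-k by omega]
      have h2 := Finset.sum_range_succ' (fun j => B q m j * B q n j * P q j * q^(2*((m+1-j)*(n-j)))) (m+1)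
      have h3 : B q m (m+1) * B q n (m+1) * P q (m+1) * q^(2*((m+1-(m+1))*(n-(m+1)))) = 0 := by
        rw [B_eq_zero (Nat.lt_succ_self m)]; ring
      have h4 : B q m 0 * B q n 0 * P q 0 * q^(2*((m+1-0)*(n-0))) = q^(2*((m+1)*n)) := by
        rw [B_zero hroot, B_zero hroot, P_zero]; simp
      calc ∑ k ∈ range (m+1), B q m (k+1) * B q n (k+1) * P q (k+1) * q^(2*((m-k)*(n-(k+1))))
          = ∑ k ∈ range (m+1), B q m (k+1) * B q n (k+1) * P q (k+1) * q^(2*((m+1-(k+1))*(n-(k+1)))) := by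
            exact Finset.sum_congr rfl (fun k _ => h1 k)
        _ = (∑ j ∈ range ((m+1)+1), B q m j * B q n j * P q j * q^(2*((m+1-j)*(n-j)))) - q^(2*((m+1)*n)) := by
            rw [h2, h4]; ring
        _ = (∑ j ∈ range (m+1), B q m j * B q n j * P q j * q^(2*((m+1-j)*(n-j)))) - q^(2*((m+1)*n)) := by
            rw [Finset.sum_range_succ, h3, add_zero]
    rw [hre]
    have hfinal : (∑ j ∈ range (m+1), B q m j * B q n j * P q j * q^(2*((m+1-j)*(n-j))))
        + ∑ k ∈ range (m+1), B q m k * (B q n (k+1) * P q (k+1)) * q^(2*((m-k)*(n-k)))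
        = 1 := by
      rw [← Finset.sum_add_distrib]
      rw [← ih n]
      apply Finset.sum_congr rfl
      intro k hk
      have hkm : k ≤ m := by simpa using Nat.lt_succ_iff.mp (mem_range.mp hk)
      have hsplit : q^(2*((m+1-k)*(n-k))) = q^(2*((m-k)*(n-k))) * q^(2*(n-k)) := by
        rw [show m+1-k = (m-k)+1 by omega, show 2*(((m-k)+1)*(n-k)) = 2*((m-k)*(n-k)) + 2*(n-k) by ring, pow_add]
      rw [hsplit]
      have := bracket hroot n k
      calc B q m k * B q n k * P q k * (q^(2*((m-k)*(n-k))) * q^(2*(n-k)))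
            + B q m k * (B q n (k+1) * P q (k+1)) * q^(2*((m-k)*(n-k)))
          = B q m k * q^(2*((m-k)*(n-k))) * (B q n k * P q k * q^(2*(n-k)) + B q n (k+1) * P q (k+1)) := by ring
        _ = B q m k * q^(2*((m-k)*(n-k))) * (B q n k * P q k) := by rw [this]
        _ = B q m k * B q n k * P q k * q^(2*((m-k)*(n-k))) := by ring
    linear_combination hfinal

lemma addCoeff (hq : q ≠ 0) (hroot : ∀ j : ℕ, j ≠ 0 → q ^ (2 * j) ≠ 1) (a b : ℕ) :
    sqCoeff q (a+b) * B q (a+b) b = sqCoeff q a * sqCoeff q b * q^(2*(a*b)) := by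
  rw [sqCoeff_eq hq hroot, sqCoeff_eq hq hroot, sqCoeff_eq hq hroot, B,
      if_pos (Nat.le_add_left b a), Nat.add_sub_cancel]
  have h1 := P_ne hroot a
  have h2 := P_ne hroot b
  have h3 := P_ne hroot (a+b)
  field_simp
  ring

lemma PT (hq : q ≠ 0) (hroot : ∀ j : ℕ, j ≠ 0 → q ^ (2 * j) ≠ 1) (a b k : ℕ) :
    sqCoeff q a * sqCoeff q k * sqCoeff q b * (q⁻¹)^(k*k)
    = sqCoeff q (k+a) * sqCoeff q (k+b) * (q⁻¹)^(2*((k+a)*(k+b)))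
      * (B q (k+a) k * B q (k+b) k * P q k * q^(2*(a*b))) := by
  rw [sqCoeff_eq hq hroot, sqCoeff_eq hq hroot, sqCoeff_eq hq hroot, sqCoeff_eq hq hroot,
      sqCoeff_eq hq hroot, B, if_pos (Nat.le_add_right k a), B, if_pos (Nat.le_add_right k b),
      Nat.add_sub_cancel_left, Nat.add_sub_cancel_left, inv_pow, inv_pow]
  have h1 := P_ne hroot a
  have h2 := P_ne hroot b
  have h3 := P_ne hroot k
  have h4 := P_ne hroot (k+a)
  have h5 := P_ne hroot (k+b)
  field_simp
  ring

lemma PENT (hq : q ≠ 0) (hroot : ∀ j : ℕ, j ≠ 0 → q ^ (2 * j) ≠ 1) (α β : ℕ) :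
    ∑ k ∈ range (min α β + 1),
        sqCoeff q (α-k) * sqCoeff q k * sqCoeff q (β-k) * (q⁻¹)^(k*k)
      = sqCoeff q α * sqCoeff q β * (q⁻¹)^(2*(α*β)) := by
  have hsum : ∑ k ∈ range (min α β + 1), B q α k * B q β k * P q k * q^(2*((α-k)*(β-k))) = 1 := by
    rw [Finset.sum_subset (Finset.range_subset_range.2 (by omega : min α β + 1 ≤ α + 1))]
    · exact SId hroot α β
    · intro k hk hk2
      have : β < k := by
        simp only [mem_range] at hk hk2
        omega
      rw [B_eq_zero this]
      ring
  calc ∑ k ∈ range (min α β + 1), sqCoeff q (α-k) * sqCoeff q k * sqCoeff q (β-k) * (q⁻¹)^(k*k)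
      = ∑ k ∈ range (min α β + 1), sqCoeff q α * sqCoeff q β * (q⁻¹)^(2*(α*β))
          * (B q α k * B q β k * P q k * q^(2*((α-k)*(β-k)))) := by
        apply Finset.sum_congr rfl
        intro k hk
        have hk1 : k ≤ α := by simp only [mem_range] at hk; omega
        have hk2 : k ≤ β := by simp only [mem_range] at hk; omega
        obtain ⟨a, rfl⟩ := Nat.le.dest hk1
        obtain ⟨b, hb⟩ := Nat.le.dest hk2
        rw [← hb, Nat.add_sub_cancel_left, Nat.add_sub_cancel_left]
        exact PT hq hroot a b k
    _ = sqCoeff q α * sqCoeff q β * (q⁻¹)^(2*(α*β)) := by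
        rw [← Finset.mul_sum, hsum, mul_one]

variable {A : Type*} [Ring A] [Algebra ℂ A]

lemma commPow {x y : A} {s : ℂ} (h : x * y = s • (y * x)) (a b : ℕ) :
    x ^ a * y ^ b = s ^ (a * b) • (y ^ b * x ^ a) := by
  have h1 : ∀ c : ℕ, x ^ c * y = s ^ c • (y * x ^ c) := by
    intro c
    induction c with
    | zero => simp
    | succ n ihn =>
      calc x^(n+1) * y = x^n * (x*y) := by rw [pow_succ, mul_assoc]
      _ = x^n * (s • (y*x)) := by rw [h]
      _ = s • (x^n * y * x) := by rw [mul_smul_comm, mul_assoc]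
      _ = s • ((s^n • (y * x^n)) * x) := by rw [ihn]
      _ = s^(n+1) • (y * x^(n+1)) := by
          rw [smul_mul_assoc, smul_smul, mul_assoc, ← pow_succ, ← pow_succ']
  induction b with
  | zero => simp
  | succ n ihn =>
    calc x^a * y^(n+1) = (x^a * y^n) * y := by rw [pow_succ, mul_assoc]
    _ = (s^(a*n) • (y^n * x^a)) * y := by rw [ihn]
    _ = s^(a*n) • (y^n * (x^a * y)) := by rw [smul_mul_assoc, mul_assoc]
    _ = s^(a*n) • (y^n * (s^a • (y * x^a))) := by rw [h1]
    _ = (s^(a*n) * s^a) • (y^n * y * x^a) := by rw [mul_smul_comm, smul_smul, mul_assoc]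
    _ = s^(a*(n+1)) • (y^(n+1) * x^a) := by rw [← pow_add, ← pow_succ]; ring_nf

lemma qbinom (hq : q ≠ 0) (hroot : ∀ j : ℕ, j ≠ 0 → q ^ (2 * j) ≠ 1)
    {x y : A} (h : x * y = (q^2) • (y * x)) (k : ℕ) :
    (x + y)^k = ∑ j ∈ range (k+1), B q k j • (y^j * x^(k-j)) := by
  induction k with
  | zero => simp [B_zero hroot]
  | succ k ih =>
    have expand : (x+y)^(k+1)
        = (∑ j ∈ range (k+1), B q k j • (y^j * x^((k-j)+1)))
          + ∑ j ∈ range (k+1), (B q k j * q^(2*(k-j))) • (y^(j+1) * x^(k-j)) := by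
      rw [pow_succ, ih, Finset.sum_mul, ← Finset.sum_add_distrib]
      apply Finset.sum_congr rfl
      intro j hj
      have hxy : x^(k-j) * y = (q^2)^(k-j) • (y * x^(k-j)) := by
        have := commPow h (k-j) 1
        simpa using this
      rw [smul_mul_assoc, mul_add, smul_add]
      congr 1
      · rw [mul_assoc, ← pow_succ]
      · rw [mul_assoc, hxy, mul_smul_comm, smul_smul, ← mul_assoc, ← pow_succ, ← pow_mul]
    rw [expand]
    rw [Finset.sum_range_succ' (fun j => B q (k+1) j • (y^j * x^(k+1-j))) (k+1)]
    have hright : ∀ j ∈ range (k+1), B q (k+1) (j+1) • (y^(j+1) * x^(k+1-(j+1)))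
        = B q k (j+1) • (y^(j+1) * x^(k-j)) + (B q k j * q^(2*(k-j))) • (y^(j+1) * x^(k-j)) := by
      intro j hj
      rw [show k+1-(j+1) = k-j by omega, B_pascal hroot, add_smul]
      congr 2
      ring
    rw [Finset.sum_congr rfl hright, Finset.sum_add_distrib]
    have hfirst : ∑ j ∈ range (k+1), B q k j • (y^j * x^((k-j)+1))
        = (∑ j ∈ range (k+1), B q k (j+1) • (y^(j+1) * x^(k-j))) + B q (k+1) 0 • (y^0 * x^(k+1-0)) := by
      rw [Finset.sum_range_succ' (fun j => B q k j • (y^j * x^((k-j)+1))) k]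
      congr 1
      · rw [Finset.sum_range_succ, B_eq_zero (Nat.lt_succ_self k), zero_smul, add_zero]
        apply Finset.sum_congr rfl
        intro j hj
        simp only [mem_range] at hj
        rw [show (k-(j+1))+1 = k-j by omega]
      · rw [B_zero hroot, B_zero hroot]
        simp
    rw [hfirst]
    abel

lemma sumre {M : Type*} [AddCommMonoid M] (K : ℕ) (f : ℕ → ℕ → M)
    (hf : ∀ a b, K ≤ a + b → f a b = 0) :
    ∑ k ∈ Finset.range K, ∑ j ∈ Finset.range (k+1), f (k - j) j
      = ∑ a ∈ Finset.range K, ∑ b ∈ Finset.range K, f a b := by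
  have hR : ∀ a ∈ range K, ∑ b ∈ range K, f a b = ∑ b ∈ range (K - a), f a b := by
    intro a ha
    rw [Finset.sum_subset (Finset.range_subset_range.2 (by omega : K - a ≤ K))]
    intro b hb hb2
    simp only [mem_range] at ha hb hb2
    exact hf a b (by omega)
  rw [Finset.sum_congr rfl hR]
  rw [Finset.sum_sigma' (range K) (fun k => range (k+1)) (fun k j => f (k-j) j)]
  rw [Finset.sum_sigma' (range K) (fun a => range (K-a)) (fun a b => f a b)]
  apply Finset.sum_nbij' (i := fun p => (⟨p.1 - p.2, p.2⟩ : Σ _ : ℕ, ℕ))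
    (j := fun p => (⟨p.1 + p.2, p.2⟩ : Σ _ : ℕ, ℕ))
  · intro p hp
    simp only [Finset.mem_sigma, mem_range] at hp ⊢
    omega
  · intro p hp
    simp only [Finset.mem_sigma, mem_range] at hp ⊢
    omega
  · intro p hp
    simp only [Finset.mem_sigma, mem_range] at hp
    ext <;> simp <;> omega
  · intro p hp
    simp only [Finset.mem_sigma, mem_range] at hp
    ext <;> simp <;> omega
  · intro p hp
    rfl

lemma ADD (hq : q ≠ 0) (hroot : ∀ j : ℕ, j ≠ 0 → q ^ (2 * j) ≠ 1)
    {x y : A} (K : ℕ) (h : x * y = (q^2) • (y * x))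
    (hvan : ∀ a b : ℕ, K ≤ a + b → (y^b * x^a : A) = 0) :
    sqTrunc q (x+y) K = sqTrunc q x K * sqTrunc q y K := by
  have lhs : sqTrunc q (x+y) K
      = ∑ a ∈ range K, ∑ b ∈ range K, (sqCoeff q (a+b) * B q (a+b) b) • (y^b * x^a) := by
    rw [sqTrunc]
    rw [← sumre K (fun a b => (sqCoeff q (a+b) * B q (a+b) b) • (y^b * x^a))
        (fun a b hab => by
          show (sqCoeff q (a+b) * B q (a+b) b) • (y^b * x^a) = 0
          rw [hvan a b hab, smul_zero])]
    apply Finset.sum_congr rfl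
    intro k hk
    rw [qbinom hq hroot h k, Finset.smul_sum]
    apply Finset.sum_congr rfl
    intro j hj
    simp only [mem_range] at hj
    rw [smul_smul, Nat.sub_add_cancel (by omega : j ≤ k)]
  rw [lhs, sqTrunc, sqTrunc, Finset.sum_mul_sum]
  apply Finset.sum_congr rfl
  intro a ha
  apply Finset.sum_congr rfl
  intro b hb
  rw [smul_mul_assoc, mul_smul_comm, smul_smul, commPow h a b, smul_smul, addCoeff hq hroot a b]
  congr 1
  rw [← pow_mul]

end PentagonAux

open PentagonAux Finset in
/-- Pentagon identity for the q-exponential: if `u v = q² v u`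
(`u, v` nilpotent so the series make sense), then
`s_q(v) s_q(u) = s_q(u + v + q⁻¹ u v)` and moreover
`s_q(u + v + q⁻¹ u v) = s_q(u) s_q(q⁻¹ u v) s_q(v)`. -/
theorem pentagon_identity {A : Type*} [Ring A] [Algebra ℂ A]
    (q : ℂ) (hq : q ≠ 0) (hroot : ∀ j : ℕ, j ≠ 0 → q ^ (2 * j) ≠ 1)
    (u v : A) (N : ℕ) (hu : u ^ N = 0) (hv : v ^ N = 0)
    (huv : u * v = q ^ 2 • (v * u)) :
    sqTrunc q v (2 * N) * sqTrunc q u (2 * N) =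
      sqTrunc q (u + v + q⁻¹ • (u * v)) (2 * N) ∧
    sqTrunc q (u + v + q⁻¹ • (u * v)) (2 * N) =
      sqTrunc q u (2 * N) * sqTrunc q (q⁻¹ • (u * v)) (2 * N) * sqTrunc q v (2 * N) := by
  set w : A := q⁻¹ • (u * v) with hw
  set K := 2 * N with hK
  have hvu : v * u = ((q⁻¹)^2) • (u * v) := by
    rw [huv, smul_smul, show ((q⁻¹:ℂ)^2 * q^2) = 1 by field_simp, one_smul]
  have L3 : ∀ a b : ℕ, (N ≤ a ∨ N ≤ b) → u^a * v^b = 0 := by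
    intro a b hab
    rcases hab with h | h
    · have : u^a = u^N * u^(a-N) := by rw [← pow_add]; congr 1; omega
      rw [this, hu, zero_mul, zero_mul]
    · have : v^b = v^N * v^(b-N) := by rw [← pow_add]; congr 1; omega
      rw [this, hv, zero_mul, mul_zero]
  have wpow : ∀ k : ℕ, w^k = ((q⁻¹)^(k*k)) • (u^k * v^k) := by
    intro k
    induction k with
    | zero => simp
    | succ n ihn =>
      have hvun : v^n * u^1 = ((q⁻¹)^2)^(n*1) • (u^1 * v^n) := commPow hvu n 1
      simp only [pow_one, mul_one] at hvun
      calc w^(n+1) = w^n * w := pow_succ w n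
      _ = (((q⁻¹)^(n*n)) • (u^n * v^n)) * (q⁻¹ • (u * v)) := by rw [ihn, hw]
      _ = ((q⁻¹)^(n*n) * q⁻¹) • (((u^n * v^n) * u) * v) := by
          rw [smul_mul_assoc, mul_smul_comm, smul_smul, ← mul_assoc]
      _ = ((q⁻¹)^(n*n) * q⁻¹) • ((u^n * (((q⁻¹)^2)^n • (u * v^n))) * v) := by
          rw [mul_assoc (u^n), hvun]
      _ = ((q⁻¹)^(n*n) * q⁻¹ * ((q⁻¹)^2)^n) • ((u^n * (u * v^n)) * v) := by
          rw [mul_smul_comm, smul_mul_assoc, smul_smul]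
      _ = ((q⁻¹)^((n+1)*(n+1))) • (u^(n+1) * v^(n+1)) := by
          congr 1
          · rw [← pow_mul]
            ring
          · simp only [pow_succ, mul_assoc]
  have huw : u * w = (q^2) • (w * u) := by
    have h1 : w * u = (q⁻¹ * (q⁻¹)^2) • (u * (u * v)) := by
      rw [hw, smul_mul_assoc, mul_assoc, hvu, mul_smul_comm, smul_smul]
    rw [h1, smul_smul, hw, mul_smul_comm]
    congr 1
    field_simp
  have hwv : w * v = (q^2) • (v * w) := by
    have h1 : v * w = (q⁻¹ * (q⁻¹)^2) • ((u * v) * v) := by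
      rw [hw, mul_smul_comm, ← mul_assoc, hvu, smul_mul_assoc, smul_smul]
    rw [h1, smul_smul, hw, smul_mul_assoc]
    congr 1
    field_simp
  have hxv : (u+w) * v = (q^2) • (v * (u+w)) := by
    rw [add_mul, mul_add, huv, hwv, smul_add]
  have WU : ∀ j c : ℕ, w^j * u^c = ((q⁻¹)^(j*j) * ((q⁻¹)^2)^(j*c)) • (u^(j+c) * v^j) := by
    intro j c
    rw [wpow j, smul_mul_assoc, mul_assoc, commPow hvu j c, mul_smul_comm, smul_smul,
        ← mul_assoc, ← pow_add]
  have hvan2 : ∀ a b : ℕ, K ≤ a + b → (w^b * u^a : A) = 0 := by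
    intro a b hab
    rw [WU b a, L3 (b+a) b (Or.inl (by omega)), smul_zero]
  have hvan1 : ∀ a b : ℕ, K ≤ a + b → (v^b * (u+w)^a : A) = 0 := by
    intro a b hab
    rw [qbinom hq hroot huw a, Finset.mul_sum]
    apply Finset.sum_eq_zero
    intro j hj
    simp only [mem_range] at hj
    rw [mul_smul_comm, WU j (a-j), show j + (a-j) = a by omega, mul_smul_comm,
        ← mul_assoc, commPow hvu b a, smul_mul_assoc, mul_assoc, ← pow_add,
        L3 a (b+j) (by omega), smul_zero, smul_zero, smul_zero]
  have e : u + v + w = (u + w) + v := by abel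
  have key2 : sqTrunc q (u + v + w) K = sqTrunc q u K * sqTrunc q w K * sqTrunc q v K := by
    rw [e, ADD hq hroot K hxv hvan1, ADD hq hroot K huw hvan2]
  have TNF : ∀ a k b : ℕ, (u^a * w^k) * v^b = ((q⁻¹)^(k*k)) • (u^(a+k) * v^(k+b)) := by
    intro a k b
    rw [wpow k, mul_smul_comm, smul_mul_assoc]
    congr 1
    rw [← mul_assoc, ← pow_add, mul_assoc, ← pow_add]
  have hNK : N ≤ K := by omega
  have LHSY : sqTrunc q v K * sqTrunc q u K
      = ∑ p ∈ (range N ×ˢ range N),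
          (sqCoeff q p.1 * sqCoeff q p.2 * (q⁻¹)^(2*(p.1*p.2))) • (u^p.1 * v^p.2) := by
    rw [sqTrunc, sqTrunc, Finset.sum_mul_sum]
    have step : ∀ b ∈ range K, ∀ a ∈ range K, (sqCoeff q b • v^b) * (sqCoeff q a • u^a)
        = (sqCoeff q a * sqCoeff q b * (q⁻¹)^(2*(a*b))) • (u^a * v^b) := by
      intro b _ a _
      rw [smul_mul_assoc, mul_smul_comm, smul_smul, commPow hvu b a, smul_smul]
      congr 1
      rw [← pow_mul]
      ring
    rw [Finset.sum_congr rfl (fun b hb => Finset.sum_congr rfl (fun a ha => step b hb a ha))]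
    rw [Finset.sum_comm]
    rw [← Finset.sum_product']
    refine (Finset.sum_subset (Finset.product_subset_product
      (Finset.range_subset_range.2 hNK) (Finset.range_subset_range.2 hNK)) ?_).symm
    intro p hp hp2
    simp only [Finset.mem_product, mem_range] at hp hp2
    rw [L3 p.1 p.2 (by omega), smul_zero]
  have RHSY : sqTrunc q u K * sqTrunc q w K * sqTrunc q v K
      = ∑ p ∈ (range N ×ˢ range N),
          (sqCoeff q p.1 * sqCoeff q p.2 * (q⁻¹)^(2*(p.1*p.2))) • (u^p.1 * v^p.2) := by
    have t1 : sqTrunc q u K * sqTrunc q w K * sqTrunc q v K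
        = ∑ a ∈ range K, ∑ k ∈ range K, ∑ b ∈ range K,
            (sqCoeff q a * sqCoeff q k * sqCoeff q b * (q⁻¹)^(k*k)) • (u^(a+k) * v^(k+b)) := by
      rw [sqTrunc, sqTrunc, sqTrunc, Finset.sum_mul_sum, Finset.sum_mul]
      apply Finset.sum_congr rfl
      intro a _
      rw [Finset.sum_mul]
      apply Finset.sum_congr rfl
      intro k _
      rw [Finset.mul_sum]
      apply Finset.sum_congr rfl
      intro b _
      simp only [smul_mul_assoc, mul_smul_comm, smul_smul]
      rw [TNF a k b, smul_smul]
      congr 1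
      ring
    rw [t1]
    have t2 : ∑ t ∈ (range K) ×ˢ ((range K) ×ˢ (range K)),
            (sqCoeff q t.1 * sqCoeff q t.2.1 * sqCoeff q t.2.2 * (q⁻¹)^(t.2.1*t.2.1))
              • (u^(t.1+t.2.1) * v^(t.2.1+t.2.2))
        = ∑ a ∈ range K, ∑ k ∈ range K, ∑ b ∈ range K,
            (sqCoeff q a * sqCoeff q k * sqCoeff q b * (q⁻¹)^(k*k)) • (u^(a+k) * v^(k+b)) := by
      rw [Finset.sum_product]
      apply Finset.sum_congr rfl
      intro a _
      rw [Finset.sum_product]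
    rw [← t2]
    have t3 : ∑ t ∈ (range K) ×ˢ ((range K) ×ˢ (range K)),
            (sqCoeff q t.1 * sqCoeff q t.2.1 * sqCoeff q t.2.2 * (q⁻¹)^(t.2.1*t.2.1))
              • (u^(t.1+t.2.1) * v^(t.2.1+t.2.2))
        = ∑ t ∈ ((range K) ×ˢ ((range K) ×ˢ (range K))).filter
              (fun t => t.1 + t.2.1 < N ∧ t.2.1 + t.2.2 < N),
            (sqCoeff q t.1 * sqCoeff q t.2.1 * sqCoeff q t.2.2 * (q⁻¹)^(t.2.1*t.2.1))
              • (u^(t.1+t.2.1) * v^(t.2.1+t.2.2)) := by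
      refine (Finset.sum_subset (Finset.filter_subset _ _) ?_).symm
      intro t ht ht2
      simp only [Finset.mem_filter, ht, true_and, not_and_or, not_lt] at ht2
      rw [L3 (t.1+t.2.1) (t.2.1+t.2.2) (by omega), smul_zero]
    rw [t3]
    have t4 : ∑ t ∈ ((range K) ×ˢ ((range K) ×ˢ (range K))).filter
              (fun t => t.1 + t.2.1 < N ∧ t.2.1 + t.2.2 < N),
            (sqCoeff q t.1 * sqCoeff q t.2.1 * sqCoeff q t.2.2 * (q⁻¹)^(t.2.1*t.2.1))
              • (u^(t.1+t.2.1) * v^(t.2.1+t.2.2))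
        = ∑ s ∈ (range N ×ˢ range N).sigma (fun p => range (min p.1 p.2 + 1)),
            (sqCoeff q (s.1.1 - s.2) * sqCoeff q s.2 * sqCoeff q (s.1.2 - s.2) * (q⁻¹)^(s.2*s.2))
              • (u^s.1.1 * v^s.1.2) := by
      apply Finset.sum_nbij' (i := fun t => (⟨(t.1 + t.2.1, t.2.1 + t.2.2), t.2.1⟩ :
          Σ _ : ℕ × ℕ, ℕ))
        (j := fun s => (s.1.1 - s.2, (s.2, s.1.2 - s.2)))
      · intro t ht
        simp only [Finset.mem_filter, Finset.mem_product, mem_range] at ht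
        simp only [Finset.mem_sigma, Finset.mem_product, mem_range]
        omega
      · intro s hs
        simp only [Finset.mem_sigma, Finset.mem_product, mem_range] at hs
        simp only [Finset.mem_filter, Finset.mem_product, mem_range]
        omega
      · intro t ht
        simp only [Finset.mem_filter, Finset.mem_product, mem_range] at ht
        simp only
        ext <;> simp <;> omega
      · intro s hs
        simp only [Finset.mem_sigma, Finset.mem_product, mem_range] at hs
        simp only
        ext <;> simp <;> omega
      · intro t ht
        simp only [Finset.mem_filter, Finset.mem_product, mem_range] at ht
        simp only
        rw [show t.1 + t.2.1 - t.2.1 = t.1 by omega, show t.2.1 + t.2.2 - t.2.1 = t.2.2 by omega]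
    rw [t4, Finset.sum_sigma]
    apply Finset.sum_congr rfl
    intro p hp
    dsimp only
    rw [← Finset.sum_smul, PENT hq hroot p.1 p.2]
  rw [hK] at key2 LHSY RHSY ⊢
  exact ⟨LHSY.trans (RHSY.symm.trans key2.symm), key2⟩
end
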